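/- There exists a constant c > 0 with the following property. Let k1, k2, k3 be nonzero integers with k := k1+k2+k3 and H_3 = k^3 - k1^3 - k2^3 - k3^3. If (i) |H_3| < c·max(|k1|,|k2|,|k3|)^2, and (ii) k_j ≠ k for all j ∈ {1,2,3}, then |k_j| ≥ c·|k| for all j ∈ {1,2,3}. -/
import Mathlib


lemma core (k1 k2 k3 : ℤ) (h1 : k1 ≠ 0) (h2 : k2 ≠ 0) (h3 : k3 ≠ 0)
    (ha : k2 + k3 ≠ 0) (hb : k1 + k3 ≠ 0) (hd : k1 + k2 ≠ 0)
    (hH : 100 * |(k1+k2+k3)^3 - k1^3 - k2^3 - k3^3| < (max |k1| (max |k2| |k3|))^2) :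
    |k1+k2+k3| ≤ 100 * |k1| := by
  by_contra hc
  push_neg at hc
  set k : ℤ := k1 + k2 + k3 with hk
  set K : ℤ := max |k1| (max |k2| |k3|) with hKdef
  set A : ℤ := |k2 + k3| with hAdef
  set B : ℤ := |k1 + k3| with hBdef
  set D : ℤ := |k1 + k2| with hDdef
  have habs : |k^3 - k1^3 - k2^3 - k3^3| = 3 * (A * (B * D)) := by
    have hid : k^3 - k1^3 - k2^3 - k3^3 = 3*((k2+k3)*((k1+k3)*(k1+k2))) := by
      rw [hk]; ring
    rw [hid, abs_mul, abs_mul, abs_mul]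
    norm_num [hAdef, hBdef, hDdef]
  rw [habs] at hH
  have hA1 : 1 ≤ A := Int.one_le_abs ha
  have hB1 : 1 ≤ B := Int.one_le_abs hb
  have hD1 : 1 ≤ D := Int.one_le_abs hd
  have hk1 : 1 ≤ |k1| := Int.one_le_abs h1
  have hkA : |k| - |k1| ≤ A := by
    have e : k2 + k3 = k - k1 := by rw [hk]; ring
    rw [hAdef, e]
    exact abs_sub_abs_le_abs_sub k k1
  have hA2 : A ≤ |k| + |k1| := by
    have e : k2 + k3 = k - k1 := by rw [hk]; ring
    rw [hAdef, e]
    exact abs_sub k k1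
  have hBD2 : |k| - |k1| ≤ B + D := by
    have e : (k1 + k3) + (k1 + k2) = k + k1 := by rw [hk]; ring
    have h5 : |k + k1| ≤ B + D := by rw [hBdef, hDdef, ← e]; exact abs_add_le _ _
    have h6 : |k| - |k1| ≤ |k + k1| := by
      have := abs_sub_abs_le_abs_sub k (-k1)
      simpa [sub_neg_eq_add] using this
    linarith
  have hK1 : |k1| ≤ K := le_max_left _ _
  have hK2 : |k2| ≤ K := le_trans (le_max_left _ _) (le_max_right _ _)
  have hK3 : |k3| ≤ K := le_trans (le_max_right _ _) (le_max_right _ _)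
  have hKnn : 0 ≤ K := le_trans (abs_nonneg k1) hK1
  have hKcase : K = |k1| ∨ K = |k2| ∨ K = |k3| := by
    rcases max_cases |k2| |k3| with ⟨h', _⟩ | ⟨h', _⟩ <;>
      rcases max_cases |k1| (max |k2| |k3|) with ⟨h'', _⟩ | ⟨h'', _⟩ <;>
      simp_all [hKdef] <;> omega
  have hKB2 : K ≤ |k2| + |k1| + |k| := by
    rcases hKcase with h | h | h
    · linarith [abs_nonneg k2, abs_nonneg k]
    · linarith [abs_nonneg k1, abs_nonneg k]
    · have e : k3 = k - k1 - k2 := by rw [hk]; ring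
      have : |k3| ≤ |k| + |k1| + |k2| := by
        rw [e]
        calc |k - k1 - k2| ≤ |k - k1| + |k2| := abs_sub _ _
          _ ≤ |k| + |k1| + |k2| := by have := abs_sub k k1; linarith
      linarith
  have hKB3 : K ≤ |k3| + |k1| + |k| := by
    rcases hKcase with h | h | h
    · linarith [abs_nonneg k3, abs_nonneg k]
    · have e : k2 = k - k1 - k3 := by rw [hk]; ring
      have : |k2| ≤ |k| + |k1| + |k3| := by
        rw [e]
        calc |k - k1 - k3| ≤ |k - k1| + |k3| := abs_sub _ _
          _ ≤ |k| + |k1| + |k3| := by have := abs_sub k k1; linarith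
      linarith
    · linarith [abs_nonneg k1, abs_nonneg k]
  have hBDlow : |k2| * |k3| - |k|^2 - |k| * A ≤ B * D := by
    have kkid : (k1+k3) * (k1+k2) = (k*k - k*(k2+k3)) + k2*k3 := by rw [hk]; ring
    have e1 : B * D = |(k1+k3) * (k1+k2)| := (abs_mul _ _).symm
    have e2 : |k2*k3| - |k*k - k*(k2+k3)| ≤ |(k*k - k*(k2+k3)) + k2*k3| := by
      have h' := abs_sub ((k*k - k*(k2+k3)) + k2*k3) (k*k - k*(k2+k3))
      have h'' : (k*k - k*(k2+k3)) + k2*k3 - (k*k - k*(k2+k3)) = k2*k3 := by ring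
      rw [h''] at h'
      linarith
    have e3 : |k*k - k*(k2+k3)| ≤ |k|^2 + |k| * A := by
      calc |k*k - k*(k2+k3)| ≤ |k*k| + |k*(k2+k3)| := abs_sub _ _
        _ = |k|^2 + |k| * A := by rw [abs_mul, abs_mul, hAdef]; ring
    have e4 : |k2*k3| = |k2| * |k3| := abs_mul _ _
    rw [e1, kkid]
    linarith
  rcases le_or_gt K (4 * |k|) with hcase | hcase
  · -- K ≤ 4|k|
    have hknz : 1 ≤ |k| := by linarith
    have h99 : 99 * |k| < 100 * (|k| - |k1|) := by linarith
    have hsq : (99 * |k|)^2 ≤ (100 * (|k| - |k1|))^2 := by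
      have h0 : (0:ℤ) ≤ 99 * |k| := by positivity
      exact pow_le_pow_left₀ h0 (le_of_lt h99) 2
    have hKsq : K^2 ≤ 16 * |k|^2 := by
      have := mul_self_le_mul_self hKnn hcase
      linarith [this]
    have hbd : B + D ≤ 2 * (B * D) := by
      have hp : 0 ≤ (B - 1) * (D - 1) :=
        mul_nonneg (by linarith) (by linarith)
      linarith [hp]
    have h5 : (|k| - |k1|) * (|k| - |k1|) ≤ A * (B + D) :=
      mul_le_mul hkA hBD2 (by linarith) (by linarith)
    have h6 : A * (B + D) ≤ 2 * (A * (B * D)) := by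
      have := mul_le_mul_of_nonneg_left hbd (by linarith : (0:ℤ) ≤ A)
      linarith [this]
    have hksq : 1 ≤ |k|^2 := by
      have := pow_le_pow_left₀ (by norm_num : (0:ℤ) ≤ 1) hknz 2
      simpa using this
    linarith [h5, h6, hsq, hKsq, hH, hksq]
  · -- 4|k| < K
    have hk1k : |k1| ≤ |k| := by linarith
    have hs0 : 0 ≤ K - |k1| - |k| := by linarith [abs_nonneg k]
    have hm : (K - |k1| - |k|) * (K - |k1| - |k|) ≤ |k2| * |k3| :=
      mul_le_mul (by linarith) (by linarith) hs0 (by linarith [abs_nonneg k2])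
    have h2s : K < 2 * (K - |k1| - |k|) := by linarith
    have hsqs : K^2 < 4 * ((K - |k1| - |k|) * (K - |k1| - |k|)) := by
      have := mul_self_lt_mul_self hKnn h2s
      linarith [this]
    have hkAle : |k| * A ≤ 2 * |k|^2 := by
      have e1 := mul_le_mul_of_nonneg_left hA2 (abs_nonneg k)
      have e2 := mul_le_mul_of_nonneg_left hk1k (abs_nonneg k)
      linarith [e1, e2]
    have hk2K : 16 * |k|^2 < K^2 := by
      have h0 : 0 ≤ 4 * |k| := by positivity
      have := mul_self_lt_mul_self h0 hcase
      linarith [this]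
    have hABD : B * D ≤ A * (B * D) := by
      have h0 : 0 ≤ B * D := by positivity
      exact le_mul_of_one_le_left h0 hA1
    linarith [hBDlow, hm, hsqs, hkAle, hk2K, hABD, hH, sq_nonneg K]


/-- Trichotomy for the cubic dispersion relation: small H₃ and no resonance forces
all frequencies comparable to k. -/
theorem stmt4 :
    ∃ c : ℝ, 0 < c ∧ ∀ k1 k2 k3 : ℤ, k1 ≠ 0 → k2 ≠ 0 → k3 ≠ 0 →
      ((|(k1 + k2 + k3) ^ 3 - k1 ^ 3 - k2 ^ 3 - k3 ^ 3| : ℤ) : ℝ)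
          < c * ((max |k1| (max |k2| |k3|) : ℤ) : ℝ) ^ 2 →
      k1 ≠ k1 + k2 + k3 → k2 ≠ k1 + k2 + k3 → k3 ≠ k1 + k2 + k3 →
      (c * ((|k1 + k2 + k3| : ℤ) : ℝ) ≤ ((|k1| : ℤ) : ℝ)
        ∧ c * ((|k1 + k2 + k3| : ℤ) : ℝ) ≤ ((|k2| : ℤ) : ℝ)
        ∧ c * ((|k1 + k2 + k3| : ℤ) : ℝ) ≤ ((|k3| : ℤ) : ℝ)) := by
  refine ⟨1/100, by norm_num, fun k1 k2 k3 h1 h2 h3 hH r1 r2 r3 => ?_⟩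
  have ha : k2 + k3 ≠ 0 := fun h => r1 (by omega)
  have hb : k1 + k3 ≠ 0 := fun h => r2 (by omega)
  have hd : k1 + k2 ≠ 0 := fun h => r3 (by omega)
  -- convert hypothesis to integers
  have hHZ : 100 * |(k1+k2+k3)^3 - k1^3 - k2^3 - k3^3|
      < (max |k1| (max |k2| |k3|))^2 := by
    have h100 : (100:ℝ) * ((|(k1 + k2 + k3) ^ 3 - k1 ^ 3 - k2 ^ 3 - k3 ^ 3| : ℤ) : ℝ)
        < ((max |k1| (max |k2| |k3|) : ℤ) : ℝ) ^ 2 := by linarith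
    exact_mod_cast h100
  have c1 : |k1+k2+k3| ≤ 100 * |k1| := core k1 k2 k3 h1 h2 h3 ha hb hd hHZ
  have c2 : |k1+k2+k3| ≤ 100 * |k2| := by
    have e1 : (k2+k1+k3)^3 - k2^3 - k1^3 - k3^3
        = (k1+k2+k3)^3 - k1^3 - k2^3 - k3^3 := by ring
    have e2 : max |k2| (max |k1| |k3|) = max |k1| (max |k2| |k3|) := by
      rw [max_left_comm]
    have := core k2 k1 k3 h2 h1 h3 (by omega) (by omega) (by omega)
      (by rw [e1, e2]; exact hHZ)
    have e3 : k2 + k1 + k3 = k1 + k2 + k3 := by ring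
    rwa [e3] at this
  have c3 : |k1+k2+k3| ≤ 100 * |k3| := by
    have e1 : (k3+k2+k1)^3 - k3^3 - k2^3 - k1^3
        = (k1+k2+k3)^3 - k1^3 - k2^3 - k3^3 := by ring
    have e2 : max |k3| (max |k2| |k1|) = max |k1| (max |k2| |k3|) := by
      rcases le_total |k1| |k2| with h|h <;> rcases le_total |k2| |k3| with h'|h' <;>
        rcases le_total |k1| |k3| with h''|h'' <;> simp [max_def] <;> omega
    have := core k3 k2 k1 h3 h2 h1 (by omega) (by omega) (by omega)
      (by rw [e1, e2]; exact hHZ)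
    have e3 : k3 + k2 + k1 = k1 + k2 + k3 := by ring
    rwa [e3] at this
  refine ⟨?_, ?_, ?_⟩
  · have : ((|k1+k2+k3| : ℤ):ℝ) ≤ 100 * ((|k1|:ℤ):ℝ) := by exact_mod_cast c1
    linarith
  · have : ((|k1+k2+k3| : ℤ):ℝ) ≤ 100 * ((|k2|:ℤ):ℝ) := by exact_mod_cast c2
    linarith
  · have : ((|k1+k2+k3| : ℤ):ℝ) ≤ 100 * ((|k3|:ℤ):ℝ) := by exact_mod_cast c3
    linarith
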